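/- The 2/3 rule: Let Σ be a skeleton pairing of the 2m̄ edges of the circle graph C_{m+m'} (with m+m' = 2m̄ and distinguished vertices 0 and m), i.e., a perfect matching of the edge set containing no parallel bridges and such that two matched edges are adjacent only if their common vertex lies in {0, m}. Define the permutation τ on the vertex set by: if e = (i, i+1) is the outgoing edge of vertex i and e' = (τi − 1, τi) is the edge matched to e, then i ↦ τi. Let L(Σ) be the number of orbits of τ not containing the vertex 0. Then L(Σ) ≤ (2m̄)/3 + 1/3. -/
import Mathlib


/-- The map `τ` associated with a pairing `σ` of the edges of the cycle on `ZMod n`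
(edge `e_i = (i, i+1)` being matched with `e_{σ i}`):  `τ i = σ i + 1`, the terminal
vertex of the edge matched with the outgoing edge of `i`. -/
def tauPerm {n : ℕ} (σ : Equiv.Perm (ZMod n)) : Equiv.Perm (ZMod n) :=
  σ.trans (Equiv.addRight 1)

/-- `σ` is a skeleton pairing of the edges `e_i = (i,i+1)` of the cycle on `ZMod n`
with distinguished vertices `0` and `m`: it is a perfect matching of the edge set
(a fixed-point-free involution), two matched edges are adjacent only if their common
vertex lies in `{0, m}`, and there are no parallel bridges, i.e. no pair of bridges
`{e_i, e_j}`, `{e_{i+1}, e_{j-1}}` with `i+1, j ∉ {0, m}`. -/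
def IsSkeleton {n : ℕ} (m : ZMod n) (σ : Equiv.Perm (ZMod n)) : Prop :=
  (∀ i, σ (σ i) = i) ∧ (∀ i, σ i ≠ i) ∧
    (∀ i, σ i = i + 1 → i + 1 = 0 ∨ i + 1 = m) ∧
    (∀ i, σ (i + 1) = σ i - 1 → i + 1 = 0 ∨ i + 1 = m ∨ σ i = 0 ∨ σ i = m)

/-- The 2/3 rule: the number `L(Σ)` of orbits of `τ` not containing the vertex `0`
satisfies `L(Σ) ≤ (2 m̄)/3 + 1/3`, where `2 m̄` is the number of edges. -/
theorem two_thirds_rule (mb : ℕ) (hmb : 0 < mb) (m : ZMod (2 * mb))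
    (σ : Equiv.Perm (ZMod (2 * mb))) (hσ : IsSkeleton m σ) :
    (Set.ncard {s : Set (ZMod (2 * mb)) |
        ∃ i, ¬ (tauPerm σ).SameCycle 0 i ∧ s = {j | (tauPerm σ).SameCycle i j}} : ℝ)
      ≤ 2 * mb / 3 + 1 / 3 := by
  classical
  haveI : NeZero (2 * mb) := ⟨by omega⟩
  obtain ⟨h1, h2, h3, h4⟩ := hσ
  set τ := tauPerm σ with hτ
  have hτdef : ∀ i, τ i = σ i + 1 := fun i => rfl
  set orbF : ZMod (2 * mb) → Finset (ZMod (2 * mb)) :=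
    fun i => Finset.univ.filter (fun j => τ.SameCycle i j) with horbF
  have hmem : ∀ i j, j ∈ orbF i ↔ τ.SameCycle i j := by
    intro i j; simp [horbF]
  have horb_eq : ∀ i j, τ.SameCycle i j → orbF i = orbF j := by
    intro i j hij
    ext x; simp only [hmem]
    exact ⟨fun h => hij.symm.trans h, fun h => hij.trans h⟩
  set F : Finset (Finset (ZMod (2 * mb))) :=
    Finset.univ.filter (fun t => ∃ i, ¬ τ.SameCycle 0 i ∧ t = orbF i) with hF
  have hS : {s : Set (ZMod (2 * mb)) |
        ∃ i, ¬ τ.SameCycle 0 i ∧ s = {j | τ.SameCycle i j}}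
      = (fun t : Finset (ZMod (2 * mb)) => (↑t : Set (ZMod (2 * mb)))) '' ↑F := by
    ext s
    simp only [Set.mem_setOf_eq, Set.mem_image, Finset.mem_coe, hF, Finset.mem_filter,
      Finset.mem_univ, true_and]
    constructor
    · rintro ⟨i, hi, rfl⟩
      exact ⟨orbF i, ⟨i, hi, rfl⟩, by ext x; simp [hmem]⟩
    · rintro ⟨t, ⟨i, hi, rfl⟩, rfl⟩
      exact ⟨i, hi, by ext x; simp [hmem]⟩
  rw [hS, Set.ncard_image_of_injective _ Finset.coe_injective, Set.ncard_coe_finset]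
  -- key structural fact about orbits
  have key : ∀ t ∈ F, t.Nonempty ∧ 0 ∉ t ∧ (m ∉ t → 3 ≤ t.card) := by
    intro t ht
    obtain ⟨i, hi, rfl⟩ := (Finset.mem_filter.mp ht).2
    refine ⟨⟨i, (hmem i i).mpr (Equiv.Perm.SameCycle.refl τ i)⟩, ?_, ?_⟩
    · intro h0
      exact hi ((hmem i 0).mp h0).symm
    · intro hmnot
      have hm : ¬ τ.SameCycle i m := fun h => hmnot ((hmem i m).mpr h)
      have sc1 : τ.SameCycle i (τ i) := ⟨1, by simp⟩
      have sc2 : τ.SameCycle i (τ (τ i)) := (Equiv.Perm.sameCycle_apply_right).mpr sc1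
      have hAlg1 : τ i ≠ i := by
        intro h
        have hs : σ i = i - 1 := by
          have h' : σ i + 1 = i := (hτdef i).symm.trans h
          exact eq_sub_of_add_eq h'
        rcases h3 (i - 1) (by
            calc σ (i - 1) = σ (σ i) := by rw [hs]
              _ = i := h1 i
              _ = (i - 1) + 1 := by ring) with h' | h'
        · have hi0 : i = 0 := by rw [← h']; ring
          exact hi (by rw [hi0])
        · have him : i = m := by rw [← h']; ring
          exact hm (by rw [← him])
      have hAlg2 : τ (τ i) ≠ i := by
        intro h
        have e1 : σ (σ i + 1) + 1 = i := by
          have := h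
          rw [hτdef, hτdef] at this
          exact this
        have e2 : σ (σ i + 1) = σ (σ i) - 1 := by
          rw [h1]
          have : σ (σ i + 1) = i - 1 := by
            have := e1; linear_combination this
          exact this
        rcases h4 (σ i) e2 with h' | h' | h' | h'
        · have : τ i = 0 := by rw [hτdef]; exact h'
          exact hi ((this ▸ sc1).symm)
        · have : τ i = m := by rw [hτdef]; exact h'
          exact hm (this ▸ sc1)
        · have hi0 : i = 0 := by rw [← h1 i, h']
          exact hi (by rw [hi0])
        · have him : i = m := by rw [← h1 i, h']
          exact hm (by rw [← him])
      have hAlg3 : τ (τ i) ≠ τ i := fun h => hAlg1 (τ.injective h)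
      have hsub : ({i, τ i, τ (τ i)} : Finset (ZMod (2 * mb))) ⊆ orbF i := by
        intro x hx
        simp only [Finset.mem_insert, Finset.mem_singleton] at hx
        rcases hx with rfl | rfl | rfl
        · exact (hmem _ _).mpr (Equiv.Perm.SameCycle.refl τ _)
        · exact (hmem _ _).mpr sc1
        · exact (hmem _ _).mpr sc2
      calc 3 = ({i, τ i, τ (τ i)} : Finset (ZMod (2 * mb))).card := by
              rw [Finset.card_insert_of_notMem (by
                  simp only [Finset.mem_insert, Finset.mem_singleton]
                  push_neg
                  exact ⟨fun h => hAlg1 h.symm, fun h => hAlg2 h.symm⟩),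
                Finset.card_insert_of_notMem (by
                  simp only [Finset.mem_singleton]
                  exact fun h => hAlg3 h.symm),
                Finset.card_singleton]
        _ ≤ (orbF i).card := Finset.card_le_card hsub
  -- pairwise disjointness of orbits
  have hdisj : ∀ t₁ ∈ F, ∀ t₂ ∈ F, t₁ ≠ t₂ → Disjoint t₁ t₂ := by
    intro t₁ ht₁ t₂ ht₂ hne
    obtain ⟨i, -, rfl⟩ := (Finset.mem_filter.mp ht₁).2
    obtain ⟨j, -, rfl⟩ := (Finset.mem_filter.mp ht₂).2
    refine Finset.disjoint_left.mpr fun x hx₁ hx₂ => hne ?_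
    exact horb_eq i j (((hmem i x).mp hx₁).trans ((hmem j x).mp hx₂).symm)
  -- at most one orbit contains m
  have hmcard : (F.filter (fun t => m ∈ t)).card ≤ 1 := by
    refine Finset.card_le_one.mpr ?_
    intro t₁ ht₁ t₂ ht₂
    obtain ⟨ht₁F, hm₁⟩ := Finset.mem_filter.mp ht₁
    obtain ⟨ht₂F, hm₂⟩ := Finset.mem_filter.mp ht₂
    obtain ⟨i, -, rfl⟩ := (Finset.mem_filter.mp ht₁F).2
    obtain ⟨j, -, rfl⟩ := (Finset.mem_filter.mp ht₂F).2
    rw [horb_eq i m ((hmem i m).mp hm₁), horb_eq j m ((hmem j m).mp hm₂)]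
  -- total size bound
  have hsum : ∑ t ∈ F, t.card ≤ 2 * mb - 1 := by
    rw [← Finset.card_biUnion hdisj]
    have hub : F.biUnion id ⊆ Finset.univ.erase 0 := by
      intro x hx
      simp only [Finset.mem_biUnion, id] at hx
      obtain ⟨t, ht, hxt⟩ := hx
      refine Finset.mem_erase.mpr ⟨?_, Finset.mem_univ x⟩
      rintro rfl
      exact (key t ht).2.1 hxt
    calc (F.biUnion id).card ≤ (Finset.univ.erase (0 : ZMod (2 * mb))).card :=
          Finset.card_le_card hub
      _ = 2 * mb - 1 := by
          rw [Finset.card_erase_of_mem (Finset.mem_univ 0), Finset.card_univ, ZMod.card]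
  -- pointwise bound
  have hpt : ∀ t ∈ F, 3 ≤ t.card + 2 * (if m ∈ t then 1 else 0) := by
    intro t ht
    obtain ⟨hne, -, h3'⟩ := key t ht
    by_cases hm : m ∈ t
    · have := Finset.card_pos.mpr hne
      simp only [hm, if_true]
      omega
    · have := h3' hm
      simp only [hm, if_false]
      omega
  have hmain : 3 * F.card ≤ 2 * mb + 1 := by
    have h1' : 3 * F.card ≤ ∑ t ∈ F, (t.card + 2 * (if m ∈ t then 1 else 0)) := by
      calc 3 * F.card = ∑ _t ∈ F, 3 := by rw [Finset.sum_const, smul_eq_mul, mul_comm]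
        _ ≤ _ := Finset.sum_le_sum hpt
    rw [Finset.sum_add_distrib, ← Finset.mul_sum] at h1'
    have h2' : ∑ t ∈ F, (if m ∈ t then 1 else 0) = (F.filter (fun t => m ∈ t)).card :=
      (Finset.card_filter _ _).symm
    rw [h2'] at h1'
    omega
  have hmainR : (F.card : ℝ) * 3 ≤ 2 * mb + 1 := by
    have : ((3 * F.card : ℕ) : ℝ) ≤ ((2 * mb + 1 : ℕ) : ℝ) := by exact_mod_cast hmain
    push_cast at this
    linarith
  linarith
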